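/- Suppose ρ is a weak order in which X_k and X_ℓ are tied (ρ(k) = ρ(ℓ)), and let X_{kℓ} = {X_j : ρ(j) = ρ(k)} \ {X_k, X_ℓ}. Form ρ' by removing from ρ the pair (X_ℓ, X_k) and the pairs (X_j, X_k) and (X_ℓ, X_j) for all X_j in X_{kℓ}. Then ρ' is a weak order with ρ'(k) = ρ(k) + |X_{kℓ}| + 1, ρ'(ℓ) = ρ(ℓ) − |X_{kℓ}| − 1, ρ'(i) = ρ(i) for all other i, and ∑_i ρ(i)u_i − ∑_i ρ'(i)u_i = (u_ℓ − u_k)(|X_{kℓ}| + 1). -/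
import Mathlib


/-- The Copeland index of alternative `i` in a binary relation `r` on `Fin n`. -/
noncomputable def copeland {n : ℕ} (r : Fin n → Fin n → Prop) (i : Fin n) : ℤ :=
  (({j | r i j} : Set (Fin n)).ncard : ℤ) - (({j | r j i} : Set (Fin n)).ncard : ℤ)

/-- A weak order: a complete and transitive binary relation. -/
def IsWeakOrder {n : ℕ} (r : Fin n → Fin n → Prop) : Prop :=
  (∀ i j, r i j ∨ r j i) ∧ Transitive r

section Helpers

variable {n : ℕ} {r : Fin n → Fin n → Prop}

lemma wo_refl (hr : IsWeakOrder r) (i : Fin n) : r i i := (hr.1 i i).elim id id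

lemma cop_eq_of_tie (hr : IsWeakOrder r) {i j : Fin n} (h1 : r i j) (h2 : r j i) :
    copeland r i = copeland r j := by
  have e1 : {m | r i m} = {m | r j m} := by
    ext m; exact ⟨fun h => hr.2 h2 h, fun h => hr.2 h1 h⟩
  have e2 : {m | r m i} = {m | r m j} := by
    ext m; exact ⟨fun h => hr.2 h h1, fun h => hr.2 h h2⟩
  unfold copeland; rw [e1, e2]

lemma cop_lt_of_strict (hr : IsWeakOrder r) {i j : Fin n} (h1 : r i j) (h2 : ¬ r j i) :
    copeland r j < copeland r i := by
  have hs1 : {m | r j m} ⊂ {m | r i m} := by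
    constructor
    · intro m hm; exact hr.2 h1 hm
    · intro hsub; exact h2 (hsub (wo_refl hr i))
  have hs2 : {m | r m i} ⊂ {m | r m j} := by
    constructor
    · intro m hm; exact hr.2 hm h1
    · intro hsub; exact h2 (hsub (wo_refl hr j))
  have hn1 : ({m | r j m} : Set (Fin n)).ncard < ({m | r i m} : Set (Fin n)).ncard :=
    Set.ncard_lt_ncard hs1 (Set.toFinite _)
  have hn2 : ({m | r m i} : Set (Fin n)).ncard < ({m | r m j} : Set (Fin n)).ncard :=
    Set.ncard_lt_ncard hs2 (Set.toFinite _)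
  unfold copeland
  omega

lemma tie_of_cop_eq (hr : IsWeakOrder r) {i j : Fin n} (h : copeland r i = copeland r j) :
    r i j ∧ r j i := by
  rcases hr.1 i j with h1 | h1
  · refine ⟨h1, ?_⟩
    by_contra h2
    exact (cop_lt_of_strict hr h1 h2).ne h.symm
  · refine ⟨?_, h1⟩
    by_contra h2
    exact (cop_lt_of_strict hr h1 h2).ne h

lemma cop_between (hr : IsWeakOrder r) {a b c : Fin n} (h1 : r a b) (h2 : r b c)
    (h3 : copeland r a = copeland r c) : copeland r b = copeland r a := by
  by_cases hba : r b a
  · exact cop_eq_of_tie hr hba h1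
  · have hlt : copeland r b < copeland r a := cop_lt_of_strict hr h1 hba
    by_cases hcb : r c b
    · have := cop_eq_of_tie hr h2 hcb
      rw [this, ← h3] at hlt; exact absurd rfl hlt.ne'
    · have := cop_lt_of_strict hr h2 hcb
      rw [h3] at hlt; omega

theorem stmt5_aux (n : ℕ) (u : Fin n → ℝ) (r : Fin n → Fin n → Prop) (hr : IsWeakOrder r)
    (k l : Fin n) (hkl : k ≠ l) (htie : copeland r k = copeland r l)
    (S : Set (Fin n)) (hS : ∀ j, j ∈ S ↔ copeland r j = copeland r k ∧ j ≠ k ∧ j ≠ l)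
    (r' : Fin n → Fin n → Prop)
    (hr' : ∀ a b, r' a b ↔ r a b ∧ ¬(a = l ∧ b = k) ∧ ¬(b = k ∧ a ∈ S) ∧ ¬(a = l ∧ b ∈ S)) :
    IsWeakOrder r' ∧
    copeland r' k = copeland r k + S.ncard + 1 ∧
    copeland r' l = copeland r l - S.ncard - 1 ∧
    (∀ i, i ≠ k → i ≠ l → copeland r' i = copeland r i) ∧
    (∑ i, (copeland r i : ℝ) * u i) - (∑ i, (copeland r' i : ℝ) * u i) =
      (u l - u k) * ((S.ncard : ℝ) + 1) := by
  have hkS : k ∉ S := fun h => ((hS k).1 h).2.1 rfl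
  have hlS : l ∉ S := fun h => ((hS l).1 h).2.2 rfl
  have hkl' : r k l ∧ r l k := tie_of_cop_eq hr htie
  have tieS : ∀ j ∈ S, r j k ∧ r k j ∧ r j l ∧ r l j := by
    intro j hj
    have h1 := ((hS j).1 hj).1
    have h2 : copeland r j = copeland r l := h1.trans htie
    obtain ⟨a1, a2⟩ := tie_of_cop_eq hr h1
    obtain ⟨b1, b2⟩ := tie_of_cop_eq hr h2
    exact ⟨a1, a2, b1, b2⟩
  -- one-sided completeness step
  have step : ∀ a b, r a b → r' a b ∨ r' b a := by
    intro a b hab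
    by_cases h1 : a = l ∧ b = k
    · right
      obtain ⟨ha, hb⟩ := h1
      rw [ha, hb]
      exact (hr' k l).2 ⟨hkl'.1, fun h => hkl h.1, fun h => hkl h.1.symm, fun h => hkl h.1⟩
    by_cases h2 : b = k ∧ a ∈ S
    · right
      obtain ⟨hb, haS⟩ := h2
      rw [hb]
      refine (hr' k a).2 ⟨(tieS a haS).2.1, ?_, ?_, ?_⟩
      · rintro ⟨h, _⟩; exact hkl h
      · rintro ⟨_, hk⟩; exact hkS hk
      · rintro ⟨h, _⟩; exact hkl h
    by_cases h3 : a = l ∧ b ∈ S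
    · right
      obtain ⟨ha, hbS⟩ := h3
      rw [ha]
      refine (hr' b l).2 ⟨(tieS b hbS).2.2.1, ?_, ?_, ?_⟩
      · rintro ⟨_, h⟩; exact hkl h.symm
      · rintro ⟨h, _⟩; exact hkl h.symm
      · rintro ⟨h, _⟩; exact hlS (h ▸ hbS)
    · left; exact (hr' a b).2 ⟨hab, h1, h2, h3⟩
  have hWO : IsWeakOrder r' := by
    constructor
    · intro a b
      rcases hr.1 a b with hab | hba
      · exact step a b hab
      · exact (step b a hba).symm
    · intro a b c hab hbc
      obtain ⟨rab, pab1, pab2, pab3⟩ := (hr' a b).1 hab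
      obtain ⟨rbc, pbc1, pbc2, pbc3⟩ := (hr' b c).1 hbc
      refine (hr' a c).2 ⟨hr.2 rab rbc, ?_, ?_, ?_⟩
      · rintro ⟨ha, hc⟩
        -- a = l, c = k, so b would be in the tie class
        have hbk : b ≠ k := fun h => pab1 ⟨ha, h⟩
        have hbS : b ∉ S := fun h => pab3 ⟨ha, h⟩
        have hbl : b ≠ l := fun h => pbc1 ⟨h, hc⟩
        rw [ha] at rab
        rw [hc] at rbc
        have hb : copeland r b = copeland r l := cop_between hr rab rbc htie.symm
        exact hbS ((hS b).2 ⟨hb.trans htie.symm, hbk, hbl⟩)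
      · rintro ⟨hc, haS⟩
        have hbl : b ≠ l := fun h => pbc1 ⟨h, hc⟩
        have hbS : b ∉ S := fun h => pbc2 ⟨hc, h⟩
        have hbk : b ≠ k := fun h => pab2 ⟨h, haS⟩
        rw [hc] at rbc
        have rbk : r b k := rbc
        have hb : copeland r b = copeland r a := cop_between hr rab rbc ((hS a).1 haS).1
        exact hbS ((hS b).2 ⟨hb.trans ((hS a).1 haS).1, hbk, hbl⟩)
      · rintro ⟨ha, hcS⟩
        have hbk : b ≠ k := fun h => pab1 ⟨ha, h⟩
        have hbS : b ∉ S := fun h => pab3 ⟨ha, h⟩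
        have hbl : b ≠ l := fun h => pbc3 ⟨h, hcS⟩
        rw [ha] at rab
        have hlc : copeland r l = copeland r c := htie.symm.trans ((hS c).1 hcS).1.symm
        have hb : copeland r b = copeland r l := cop_between hr rab rbc hlc
        exact hbS ((hS b).2 ⟨hb.trans htie.symm, hbk, hbl⟩)
  -- Copeland index of k
  have houtk : {j | r' k j} = {j | r k j} := by
    ext j
    simp only [Set.mem_setOf_eq, hr']
    constructor
    · exact fun h => h.1
    · intro h
      exact ⟨h, fun hx => hkl hx.1, fun hx => hkS hx.2, fun hx => hkl hx.1⟩
  have hink : {j | r' j k} = {j | r j k} \ insert l S := by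
    ext j
    constructor
    · intro h
      obtain ⟨hj, p1, p2, _⟩ := (hr' j k).1 h
      refine ⟨hj, fun hmem => ?_⟩
      rcases Set.mem_insert_iff.mp hmem with hl | hS'
      · exact p1 ⟨hl, rfl⟩
      · exact p2 ⟨rfl, hS'⟩
    · intro h
      have hjl : j ≠ l := fun e => h.2 (by rw [e]; exact Set.mem_insert _ _)
      have hjS : j ∉ S := fun hs => h.2 (Set.mem_insert_of_mem _ hs)
      exact (hr' j k).2 ⟨h.1, fun hx => hjl hx.1, fun hx => hjS hx.2, fun hx => hjl hx.1⟩
  have hsubk : insert l S ⊆ {j | r j k} := by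
    intro j hj
    rcases hj with hj | hj
    · subst hj; exact hkl'.2
    · exact (tieS j hj).1
  have hinsl : (insert l S).ncard = S.ncard + 1 :=
    Set.ncard_insert_of_notMem hlS (Set.toFinite S)
  have hnk : ({j | r' j k} : Set (Fin n)).ncard + (S.ncard + 1)
      = ({j | r j k} : Set (Fin n)).ncard := by
    rw [hink, ← hinsl]
    exact Set.ncard_diff_add_ncard_of_subset hsubk (Set.toFinite _)
  have hcopk : copeland r' k = copeland r k + S.ncard + 1 := by
    unfold copeland
    rw [houtk]
    omega
  -- Copeland index of l
  have hinl : {j | r' j l} = {j | r j l} := by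
    ext j
    simp only [Set.mem_setOf_eq, hr']
    constructor
    · exact fun h => h.1
    · intro h
      exact ⟨h, fun hx => hkl hx.2.symm, fun hx => hkl hx.1.symm, fun hx => hlS hx.2⟩
  have houtl : {j | r' l j} = {j | r l j} \ insert k S := by
    ext j
    constructor
    · intro h
      obtain ⟨hj, p1, _, p3⟩ := (hr' l j).1 h
      refine ⟨hj, fun hmem => ?_⟩
      rcases Set.mem_insert_iff.mp hmem with hk | hS'
      · exact p1 ⟨rfl, hk⟩
      · exact p3 ⟨rfl, hS'⟩
    · intro h
      have hjk : j ≠ k := fun e => h.2 (by rw [e]; exact Set.mem_insert _ _)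
      have hjS : j ∉ S := fun hs => h.2 (Set.mem_insert_of_mem _ hs)
      exact (hr' l j).2 ⟨h.1, fun hx => hjk hx.2, fun hx => hjk hx.1, fun hx => hjS hx.2⟩
  have hsubl : insert k S ⊆ {j | r l j} := by
    intro j hj
    rcases hj with hj | hj
    · subst hj; exact hkl'.2
    · exact (tieS j hj).2.2.2
  have hinsk : (insert k S).ncard = S.ncard + 1 :=
    Set.ncard_insert_of_notMem hkS (Set.toFinite S)
  have hnl : ({j | r' l j} : Set (Fin n)).ncard + (S.ncard + 1)
      = ({j | r l j} : Set (Fin n)).ncard := by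
    rw [houtl, ← hinsk]
    exact Set.ncard_diff_add_ncard_of_subset hsubl (Set.toFinite _)
  have hcopl : copeland r' l = copeland r l - S.ncard - 1 := by
    unfold copeland
    rw [hinl]
    omega
  -- other indices
  have hother : ∀ i, i ≠ k → i ≠ l → copeland r' i = copeland r i := by
    intro i hik hil
    by_cases hiS : i ∈ S
    · have hout : {j | r' i j} = {j | r i j} \ {k} := by
        ext j
        constructor
        · intro h
          obtain ⟨hj, _, p2, _⟩ := (hr' i j).1 h
          exact ⟨hj, fun hjk => p2 ⟨hjk, hiS⟩⟩
        · intro h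
          have hjk : j ≠ k := h.2
          exact (hr' i j).2 ⟨h.1, fun hx => hil hx.1, fun hx => hjk hx.1, fun hx => hil hx.1⟩
      have hin : {j | r' j i} = {j | r j i} \ {l} := by
        ext j
        constructor
        · intro h
          obtain ⟨hj, _, _, p3⟩ := (hr' j i).1 h
          exact ⟨hj, fun hjl => p3 ⟨hjl, hiS⟩⟩
        · intro h
          have hjl : j ≠ l := h.2
          exact (hr' j i).2 ⟨h.1, fun hx => hjl hx.1, fun hx => hik hx.1, fun hx => hjl hx.1⟩
      have hkmem : k ∈ {j | r i j} := (tieS i hiS).1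
      have hlmem : l ∈ {j | r j i} := (tieS i hiS).2.2.2
      have e1 : ({j | r i j} \ {k} : Set (Fin n)).ncard + 1 = ({j | r i j} : Set (Fin n)).ncard :=
        Set.ncard_diff_singleton_add_one hkmem (Set.toFinite _)
      have e2 : ({j | r j i} \ {l} : Set (Fin n)).ncard + 1 = ({j | r j i} : Set (Fin n)).ncard :=
        Set.ncard_diff_singleton_add_one hlmem (Set.toFinite _)
      unfold copeland
      rw [hout, hin]
      omega
    · have hout : {j | r' i j} = {j | r i j} := by
        ext j
        simp only [Set.mem_setOf_eq, hr']
        constructor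
        · exact fun h => h.1
        · intro h
          exact ⟨h, fun hx => hil hx.1, fun hx => hiS hx.2, fun hx => hil hx.1⟩
      have hin : {j | r' j i} = {j | r j i} := by
        ext j
        simp only [Set.mem_setOf_eq, hr']
        constructor
        · exact fun h => h.1
        · intro h
          exact ⟨h, fun hx => hik hx.2, fun hx => hik hx.1, fun hx => hiS hx.2⟩
      unfold copeland
      rw [hout, hin]
  -- the sum identity
  refine ⟨hWO, hcopk, hcopl, hother, ?_⟩
  have hdiff : ∀ i : Fin n, (copeland r i : ℝ) * u i - (copeland r' i : ℝ) * u i =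
      (if i = k then -((S.ncard : ℝ) + 1) * u k else 0) +
      (if i = l then ((S.ncard : ℝ) + 1) * u l else 0) := by
    intro i
    by_cases hik : i = k
    · subst hik
      rw [hcopk]
      simp only [if_pos rfl, if_neg hkl]
      push_cast
      ring
    · by_cases hil : i = l
      · subst hil
        rw [hcopl]
        simp only [if_neg hik, if_pos rfl]
        push_cast
        ring
      · rw [hother i hik hil]
        simp only [if_neg hik, if_neg hil]
        ring
  rw [← Finset.sum_sub_distrib]
  calc (∑ i, ((copeland r i : ℝ) * u i - (copeland r' i : ℝ) * u i))
      = ∑ i : Fin n, ((if i = k then -((S.ncard : ℝ) + 1) * u k else 0) +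
        (if i = l then ((S.ncard : ℝ) + 1) * u l else 0)) := by
        exact Finset.sum_congr rfl fun i _ => hdiff i
    _ = (u l - u k) * ((S.ncard : ℝ) + 1) := by
        rw [Finset.sum_add_distrib, Finset.sum_ite_eq', Finset.sum_ite_eq']
        simp only [Finset.mem_univ, if_pos]
        ring

/-- "Moving apart" two tied alternatives `k, ℓ` in a weak order: removing the pair
`(ℓ,k)` and the pairs `(j,k)`, `(ℓ,j)` for all `j` tied with them yields a weak
order `r'` with `ρ'(k) = ρ(k) + |S| + 1`, `ρ'(ℓ) = ρ(ℓ) - |S| - 1`, other indices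
unchanged, and the stated change in the objective. -/
theorem stmt5 (n : ℕ) (u : Fin n → ℝ) (r : Fin n → Fin n → Prop) (hr : IsWeakOrder r)
    (k l : Fin n) (hkl : k ≠ l)
    (htie : copeland r k = copeland r l) :
    let S : Set (Fin n) := {j | copeland r j = copeland r k ∧ j ≠ k ∧ j ≠ l}
    let r' : Fin n → Fin n → Prop := fun a b =>
      r a b ∧ ¬(a = l ∧ b = k) ∧ ¬(b = k ∧ a ∈ S) ∧ ¬(a = l ∧ b ∈ S)
    IsWeakOrder r' ∧
    copeland r' k = copeland r k + S.ncard + 1 ∧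
    copeland r' l = copeland r l - S.ncard - 1 ∧
    (∀ i, i ≠ k → i ≠ l → copeland r' i = copeland r i) ∧
    (∑ i, (copeland r i : ℝ) * u i) - (∑ i, (copeland r' i : ℝ) * u i) =
      (u l - u k) * ((S.ncard : ℝ) + 1) := by
  intro S r'
  exact stmt5_aux n u r hr k l hkl htie S (fun j => Iff.rfl) r' (fun a b => Iff.rfl)

end Helpers
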